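/- Every vector spanning an extremal ray of the monotonicity cone Λ_n is a positive multiple of the indicator vector of some up-set: if v ∈ Λ_n is nonzero and generates an extremal ray (whenever a, b ∈ Λ_n and a + b = v, both a and b are scalar multiples of v), then there exist c > 0 and an up-set U of nonempty subsets of [n] such that v_S = c for S ∈ U and v_S = 0 for S ∉ U. -/

import Mathlib

/-- The nonempty subsets of `[n] = {1,…,n}` (modelled as `Fin n`). -/
abbrev NES (n : ℕ) := {S : Finset (Fin n) // S.Nonempty}

/-- The Lindblad–Uhlmann monotonicity cone `Λ_n`: vectors indexed by the
nonempty subsets of `[n]`, monotone under set inclusion and nonnegative. -/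
def Lam (n : ℕ) : Set (NES n → ℝ) :=
  {v | (∀ S T : NES n, T.1 ⊆ S.1 → v T ≤ v S) ∧ ∀ S : NES n, 0 ≤ v S}

/-- An up-set (upward-closed family) of nonempty subsets of `[n]`. -/
def IsUpSet {n : ℕ} (U : Set (NES n)) : Prop :=
  ∀ S T : NES n, S ∈ U → S.1 ⊆ T.1 → T ∈ U

/-- The 0/1 indicator vector of a family of nonempty subsets. -/
noncomputable def indFn {n : ℕ} (U : Set (NES n)) : NES n → ℝ :=
  U.indicator 1

/-- Every generator of an extremal ray of `Λ_n` is a positive multiple of the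
indicator vector of an up-set. -/
theorem extremal_eq_indicator {n : ℕ} (v : NES n → ℝ) (hv : v ∈ Lam n)
    (hne : v ≠ 0)
    (hext : ∀ a b : NES n → ℝ, a ∈ Lam n → b ∈ Lam n → a + b = v →
      (∃ s : ℝ, a = s • v) ∧ ∃ t : ℝ, b = t • v) :
    ∃ c : ℝ, 0 < c ∧ ∃ U : Set (NES n), IsUpSet U ∧
      ∀ S : NES n, (S ∈ U → v S = c) ∧ (S ∉ U → v S = 0) := by
  classical
  -- the index type must be nonempty, otherwise v = 0
  rcases isEmpty_or_nonempty (NES n) with hE | hNE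
  · exact absurd (funext fun S => hE.elim S) hne
  -- pick a maximizer
  obtain ⟨S₀, -, hmax⟩ := Finset.exists_max_image (Finset.univ : Finset (NES n)) v
    Finset.univ_nonempty
  set c := v S₀ with hc
  have hmax' : ∀ S : NES n, v S ≤ c := fun S => hmax S (Finset.mem_univ S)
  have hcpos : 0 < c := by
    by_contra h
    push_neg at h
    apply hne
    funext S
    have := hv.2 S
    have := hmax' S
    simp only [Pi.zero_apply]
    linarith
  -- dichotomy: every value is 0 or c
  have key : ∀ S : NES n, v S = 0 ∨ v S = c := by
    by_contra h
    push_neg at h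
    obtain ⟨S₁, h1, h2⟩ := h
    set t := v S₁ with ht
    have htpos : 0 < t := lt_of_le_of_ne (hv.2 S₁) (Ne.symm h1)
    have htc : t < c := lt_of_le_of_ne (hmax' S₁) h2
    set a : NES n → ℝ := fun S => min (v S) t with ha
    set b : NES n → ℝ := fun S => v S - min (v S) t with hb
    have haL : a ∈ Lam n := by
      constructor
      · intro S T hTS
        exact min_le_min (hv.1 S T hTS) le_rfl
      · intro S
        exact le_min (hv.2 S) htpos.le
    have hbL : b ∈ Lam n := by
      constructor
      · intro S T hTS
        have hm := hv.1 S T hTS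
        simp only [hb]
        rcases le_total (v T) t with h3 | h3 <;> rcases le_total (v S) t with h4 | h4 <;>
          simp [min_eq_left, min_eq_right, h3, h4] <;> linarith
      · intro S
        simp only [hb, sub_nonneg]
        exact min_le_left _ _
    have hab : a + b = v := by
      funext S
      simp [ha, hb]
    obtain ⟨⟨s, hs⟩, -⟩ := hext a b haL hbL hab
    have e0 : min c t = s * c := by
      have := congrFun hs S₀
      simpa [ha] using this
    have e1 : t = s * t := by
      have := congrFun hs S₁
      simpa [ha, ← ht] using this
    have hs1 : s = 1 := by
      have h0 : (s - 1) * t = 0 := by rw [sub_mul, one_mul]; linarith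
      rcases mul_eq_zero.mp h0 with h' | h'
      · linarith [sub_eq_zero.mp h']
      · exact absurd h' (ne_of_gt htpos)
    rw [hs1, one_mul, min_eq_right htc.le] at e0
    exact absurd e0 (ne_of_lt htc)
  refine ⟨c, hcpos, {S | v S = c}, ?_, ?_⟩
  · intro S T hS hST
    have h1 : v S ≤ v T := hv.1 T S hST
    have h2 : v T ≤ c := hmax' T
    have : v S = c := hS
    simp only [Set.mem_setOf_eq]
    linarith
  · intro S
    refine ⟨fun h => h, fun h => ?_⟩
    rcases key S with h0 | h0
    · exact h0
    · exact absurd h0 h
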